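/- Let G be a k-uniform hypergraph with n vertices and m edges. Then the Estrada index satisfies EE(G) ≤ n − 1 + e^{√((k−1)m(m(k−2)+2))}, and equality holds if and only if G has no edges (G is the edgeless hypergraph on n vertices). -/

import Mathlib

section helpers2
variable {d : Type*} [Fintype d] [DecidableEq d] {A : Matrix d d ℝ}

lemma my_trace_eq_sum_eig (hA : A.IsHermitian) : A.trace = ∑ i, hA.eigenvalues i := by
  have hU1 : (star (hA.eigenvectorUnitary : Matrix d d ℝ)) *
      (hA.eigenvectorUnitary : Matrix d d ℝ) = 1 := Unitary.coe_star_mul_self _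
  conv_lhs => rw [hA.spectral_theorem, Unitary.conjStarAlgAut_apply]
  rw [Matrix.trace_mul_cycle, hU1, Matrix.one_mul, Matrix.trace_diagonal]
  simp

lemma my_trace_sq_eq_sum_eig_sq (hA : A.IsHermitian) :
    (A * A).trace = ∑ i, hA.eigenvalues i ^ 2 := by
  set U : Matrix d d ℝ := (hA.eigenvectorUnitary : Matrix d d ℝ) with hUdef
  have hU1 : star U * U = 1 := Unitary.coe_star_mul_self _
  set D : Matrix d d ℝ := Matrix.diagonal (RCLike.ofReal ∘ hA.eigenvalues) with hDdef
  have key : A * A = U * (D * D) * star U := by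
    conv_lhs => rw [hA.spectral_theorem, Unitary.conjStarAlgAut_apply]
    simp only [Matrix.mul_assoc]
    rw [← Matrix.mul_assoc (star U) U, hU1, Matrix.one_mul]
  rw [key, Matrix.trace_mul_cycle, hU1, Matrix.one_mul,
    Matrix.diagonal_mul_diagonal, Matrix.trace_diagonal]
  simp [sq]
end helpers2

section helpers3
open Nat

lemma my_exp_sub_one_sub_eq (a : ℝ) :
    Real.exp a - 1 - a = ∑' n : ℕ, a ^ (n + 2) / ((n + 2)! : ℝ) := by
  have hsum := Real.summable_pow_div_factorial a
  have h := Summable.sum_add_tsum_nat_add (f := fun n => a ^ n / (n ! : ℝ)) 2 hsum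
  have hexp : Real.exp a = ∑' n : ℕ, a ^ n / (n ! : ℝ) := by
    rw [Real.exp_eq_exp_ℝ, NormedSpace.exp_eq_tsum_div]
  rw [hexp, ← h]
  simp [Finset.sum_range_succ]
  ring

lemma my_key_ineq (t x : ℝ) (hx : |x| ≤ t) :
    t ^ 2 * (Real.exp x - 1 - x) ≤ x ^ 2 * (Real.exp t - 1 - t) := by
  have ht : 0 ≤ t := le_trans (abs_nonneg x) hx
  rw [my_exp_sub_one_sub_eq, my_exp_sub_one_sub_eq, ← tsum_mul_left, ← tsum_mul_left]
  have hs : ∀ a : ℝ, Summable (fun n : ℕ => a ^ (n + 2) / ((n + 2)! : ℝ)) :=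
    fun a => (summable_nat_add_iff 2).2 (Real.summable_pow_div_factorial a)
  refine Summable.tsum_le_tsum (fun n => ?_) ((hs x).mul_left _) ((hs t).mul_left _)
  have hc : (0 : ℝ) < ((n + 2)! : ℝ) := by positivity
  rw [mul_div_assoc', mul_div_assoc', div_le_div_iff_of_pos_right hc]
  calc t ^ 2 * x ^ (n + 2) ≤ t ^ 2 * |x| ^ (n + 2) := by
        apply mul_le_mul_of_nonneg_left _ (sq_nonneg t)
        calc x ^ (n+2) ≤ |x ^ (n+2)| := le_abs_self _
          _ = |x| ^ (n+2) := abs_pow x (n+2)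
    _ = (t ^ 2 * x ^ 2) * |x| ^ n := by rw [pow_add, sq_abs]; ring
    _ ≤ (t ^ 2 * x ^ 2) * t ^ n := by
        apply mul_le_mul_of_nonneg_left (pow_le_pow_left₀ (abs_nonneg x) hx n) (by positivity)
    _ = x ^ 2 * t ^ (n + 2) := by rw [pow_add]; ring
end helpers3

section helpers4
variable {V : Type*} [Fintype V] [DecidableEq V]

lemma my_inner_count (g : Finset V) :
    (∑ i, ∑ j, if i = j then (0:ℕ) else if i ∈ g ∧ j ∈ g then 1 else 0)
      = g.card * (g.card - 1) := by
  have h1 : ∀ i : V, (∑ j, if i = j then (0:ℕ) else if i ∈ g ∧ j ∈ g then 1 else 0)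
      = if i ∈ g then g.card - 1 else 0 := by
    intro i
    by_cases hi : i ∈ g
    · have key : ∀ j : V, (if i = j then (0:ℕ) else if i ∈ g ∧ j ∈ g then 1 else 0)
          = if j ∈ g.erase i then 1 else 0 := by
        intro j
        by_cases h1 : i = j <;> by_cases h2 : j ∈ g <;>
          simp [h1, h2, hi, Finset.mem_erase, Ne.symm, eq_comm]
      rw [Finset.sum_congr rfl fun j _ => key j, Finset.sum_ite_mem, Finset.univ_inter,
        Finset.sum_const, smul_eq_mul, mul_one, Finset.card_erase_of_mem hi, if_pos hi]
    · rw [if_neg hi]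
      refine Finset.sum_eq_zero fun j _ => ?_
      by_cases h1 : i = j <;> simp [h1, hi]
  rw [Finset.sum_congr rfl fun i _ => h1 i, Finset.sum_ite_mem, Finset.univ_inter,
    Finset.sum_const, smul_eq_mul]

lemma my_count_bound (E : Finset (Finset V)) (k : ℕ) (hk : 2 ≤ k)
    (hunif : ∀ e ∈ E, e.card = k) :
    (∑ i, ∑ j, if i = j then (0:ℕ) else ((E.filter fun e => i ∈ e ∧ j ∈ e).card)^2)
      ≤ E.card * (k * (k-1) + (E.card - 1) * ((k-1) * (k-2))) := by
  set F : V → V → Finset V → Finset V → ℕ :=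
    fun i j e f => if i = j then (0:ℕ) else if i ∈ e ∩ f ∧ j ∈ e ∩ f then 1 else 0 with hF
  have step : ∀ i j : V, (if i = j then (0:ℕ) else ((E.filter fun e => i ∈ e ∧ j ∈ e).card)^2)
      = ∑ e ∈ E, ∑ f ∈ E, F i j e f := by
    intro i j
    by_cases h : i = j
    · simp [hF, h]
    · simp only [hF, if_neg h, sq, Finset.card_filter, Finset.sum_mul_sum]
      refine Finset.sum_congr rfl fun e _ => Finset.sum_congr rfl fun f _ => ?_
      have hprod : ((if i ∈ e ∧ j ∈ e then (1:ℕ) else 0) * (if i ∈ f ∧ j ∈ f then 1 else 0))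
          = if (i ∈ e ∧ j ∈ e) ∧ (i ∈ f ∧ j ∈ f) then 1 else 0 := by
        by_cases h1 : i ∈ e ∧ j ∈ e <;> by_cases h2 : i ∈ f ∧ j ∈ f <;> simp [h1, h2]
      rw [hprod]
      refine if_congr ?_ rfl rfl
      constructor <;> · intro hx; simp only [Finset.mem_inter] at *; tauto
  calc (∑ i, ∑ j, if i = j then (0:ℕ) else ((E.filter fun e => i ∈ e ∧ j ∈ e).card)^2)
      = ∑ i, ∑ j, ∑ e ∈ E, ∑ f ∈ E, F i j e f :=
        Finset.sum_congr rfl fun i _ => Finset.sum_congr rfl fun j _ => step i j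
    _ = ∑ i, ∑ e ∈ E, ∑ j, ∑ f ∈ E, F i j e f :=
        Finset.sum_congr rfl fun i _ => Finset.sum_comm
    _ = ∑ e ∈ E, ∑ i, ∑ j, ∑ f ∈ E, F i j e f := Finset.sum_comm
    _ = ∑ e ∈ E, ∑ i, ∑ f ∈ E, ∑ j, F i j e f :=
        Finset.sum_congr rfl fun e _ => Finset.sum_congr rfl fun i _ => Finset.sum_comm
    _ = ∑ e ∈ E, ∑ f ∈ E, ∑ i, ∑ j, F i j e f :=
        Finset.sum_congr rfl fun e _ => Finset.sum_comm
    _ = ∑ e ∈ E, ∑ f ∈ E, (e ∩ f).card * ((e ∩ f).card - 1) :=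
        Finset.sum_congr rfl fun e _ => Finset.sum_congr rfl fun f _ => my_inner_count _
    _ ≤ E.card * (k * (k-1) + (E.card - 1) * ((k-1) * (k-2))) := by
        refine le_trans (Finset.sum_le_card_nsmul _ _
          (k * (k-1) + (E.card - 1) * ((k-1) * (k-2))) fun e he => ?_)
          (le_of_eq (by rw [smul_eq_mul]))
        rw [← Finset.add_sum_erase _ _ he]
        have hdiag : (e ∩ e).card * ((e ∩ e).card - 1) = k * (k - 1) := by
          rw [Finset.inter_self, hunif e he]
        rw [hdiag]
        refine add_le_add_right (le_trans (Finset.sum_le_card_nsmul _ _ ((k-1)*(k-2))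
          fun f hf => ?_) ?_) _
        · obtain ⟨hfe, hfE⟩ := Finset.mem_erase.mp hf
          have hsub : e ∩ f ⊆ e := Finset.inter_subset_left
          have hlt : (e ∩ f).card < k := by
            rcases lt_or_eq_of_le (le_trans (Finset.card_le_card hsub) (hunif e he).le) with h | h
            · exact h
            · exfalso
              have h1 : e ∩ f = e := Finset.eq_of_subset_of_card_le hsub (by rw [h, hunif e he])
              have h2 : e ⊆ f := by rw [← h1]; exact Finset.inter_subset_right
              exact hfe (Finset.eq_of_subset_of_card_le h2
                (by rw [hunif e he, hunif f hfE])).symm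
          exact Nat.mul_le_mul (by omega) (by omega)
        · rw [Finset.card_erase_of_mem he, smul_eq_mul]
end helpers4

open scoped BigOperators

set_option linter.unusedSectionVars false

section Hyper

variable {V : Type*} [Fintype V] [DecidableEq V]

/-- The adjacency matrix of a hypergraph given by its edge set `E`:
the `(i,j)` entry, for `i ≠ j`, is the number of edges containing both `i` and `j`,
and the diagonal entries are `0`. -/
def adjMatrix (E : Finset (Finset V)) : Matrix V V ℝ :=
  fun i j => if i = j then 0 else ((E.filter fun e => i ∈ e ∧ j ∈ e).card : ℝ)

theorem adjMatrix_isHermitian (E : Finset (Finset V)) :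
    (adjMatrix E).IsHermitian := by
  unfold Matrix.IsHermitian
  ext i j
  simp only [Matrix.conjTranspose_apply, adjMatrix, star_trivial]
  rcases eq_or_ne i j with h | h
  · simp [h]
  · have hfilter : E.filter (fun e => j ∈ e ∧ i ∈ e) = E.filter (fun e => i ∈ e ∧ j ∈ e) :=
      Finset.filter_congr fun e _ => and_comm
    rw [if_neg (Ne.symm h), if_neg h, hfilter]

/-- The Estrada index of a hypergraph: `EE(G) = ∑ᵢ exp (λᵢ)`, the sum over the
eigenvalues (with multiplicity) of the adjacency matrix; equivalently `tr (exp A(G))`. -/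
noncomputable def estradaIndex (E : Finset (Finset V)) : ℝ :=
  ∑ i, Real.exp ((adjMatrix_isHermitian E).eigenvalues i)

/-- The energy of a hypergraph: `∑ᵢ |λᵢ|` over the adjacency eigenvalues. -/
noncomputable def energy (E : Finset (Finset V)) : ℝ :=
  ∑ i, |(adjMatrix_isHermitian E).eigenvalues i|

/-- The degree of a vertex: the number of edges containing it. -/
def degree (E : Finset (Finset V)) (v : V) : ℕ := (E.filter fun e => v ∈ e).card

/-- sum of eigenvalues is zero -/
lemma my_sum_eig_zero (E : Finset (Finset V)) :
    ∑ i, (adjMatrix_isHermitian E).eigenvalues i = 0 := by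
  rw [← my_trace_eq_sum_eig]
  simp [Matrix.trace, adjMatrix]

/-- sum of squares of eigenvalues equals double sum of squared entries -/
lemma my_sum_eig_sq (E : Finset (Finset V)) :
    ∑ i, (adjMatrix_isHermitian E).eigenvalues i ^ 2
      = ∑ i, ∑ j, (adjMatrix E i j) ^ 2 := by
  rw [← my_trace_sq_eq_sum_eig_sq]
  have hsym : ∀ i j : V, adjMatrix E j i = adjMatrix E i j := by
    intro i j
    have h := congrFun (congrFun (adjMatrix_isHermitian E) i) j
    simpa [Matrix.conjTranspose_apply] using h
  simp only [Matrix.trace, Matrix.diag_apply, Matrix.mul_apply]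
  refine Finset.sum_congr rfl fun i _ => Finset.sum_congr rfl fun j _ => ?_
  rw [sq, hsym i j]

lemma my_sum_sq_cast (E : Finset (Finset V)) :
    ∑ i, ∑ j, (adjMatrix E i j) ^ 2
      = ((∑ i, ∑ j, if i = j then (0:ℕ)
          else ((E.filter fun e => i ∈ e ∧ j ∈ e).card)^2 : ℕ) : ℝ) := by
  push_cast
  refine Finset.sum_congr rfl fun i _ => Finset.sum_congr rfl fun j _ => ?_
  unfold adjMatrix
  by_cases h : i = j <;> simp [h]

end Hyper

/-- For a `k`-uniform hypergraph `G` with `n` vertices and `m` edges,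
`EE(G) ≤ n - 1 + e^{√((k-1)m(m(k-2)+2))}`, with equality iff `G` is edgeless. -/
theorem stmt_6 (n k : ℕ) (hk : 2 ≤ k)
    (E : Finset (Finset (Fin n))) (hunif : ∀ e ∈ E, e.card = k) :
    estradaIndex E ≤ (n : ℝ) - 1 +
        Real.exp (Real.sqrt (((k : ℝ) - 1) * (E.card : ℝ) * ((E.card : ℝ) * ((k : ℝ) - 2) + 2))) ∧
      (estradaIndex E = (n : ℝ) - 1 +
          Real.exp (Real.sqrt (((k : ℝ) - 1) * (E.card : ℝ) * ((E.card : ℝ) * ((k : ℝ) - 2) + 2)))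
        ↔ E = ∅) := by
  set lam := (adjMatrix_isHermitian E).eigenvalues with hlam
  by_cases hE : E = ∅
  · subst hE
    have hzero : ∀ i, lam i = 0 := by
      have hS : ∑ i, lam i ^ 2 = 0 := by
        rw [hlam, my_sum_eig_sq, my_sum_sq_cast]
        norm_num
      intro i
      have := (Finset.sum_eq_zero_iff_of_nonneg
        (fun i _ => sq_nonneg (lam i))).mp hS i (Finset.mem_univ i)
      exact pow_eq_zero_iff (n := 2) (by norm_num) |>.mp this
    have hEE : estradaIndex (∅ : Finset (Finset (Fin n))) = n := by
      unfold estradaIndex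
      rw [Finset.sum_congr rfl fun i _ => by rw [← hlam, hzero i, Real.exp_zero]]
      simp
    constructor
    · rw [hEE]; norm_num
    · constructor
      · intro _; rfl
      · intro _; rw [hEE]; norm_num
  · -- nonempty case
    set m := E.card with hm
    have hm1 : 1 ≤ m := Finset.card_pos.mpr (Finset.nonempty_iff_ne_empty.mpr hE)
    set B : ℝ := ((k : ℝ) - 1) * (m : ℝ) * ((m : ℝ) * ((k : ℝ) - 2) + 2) with hB
    set S : ℝ := ∑ i, lam i ^ 2 with hS
    -- S ≤ B
    have hSB : S ≤ B := by
      rw [hS, hlam, my_sum_eig_sq, my_sum_sq_cast]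
      have h1 := my_count_bound E k hk hunif
      have h2 : ((∑ i, ∑ j, if i = j then (0:ℕ)
          else ((E.filter fun e => i ∈ e ∧ j ∈ e).card)^2 : ℕ) : ℝ)
          ≤ ((m * (k * (k-1) + (m - 1) * ((k-1) * (k-2))) : ℕ) : ℝ) := by
        exact_mod_cast h1
      refine le_trans h2 (le_of_eq ?_)
      have hk1 : (1:ℕ) ≤ k := by omega
      have hk2 : (2:ℕ) ≤ k := hk
      push_cast [Nat.cast_sub hk1, Nat.cast_sub hk2, Nat.cast_sub hm1]
      ring
    -- S > 0
    have hSpos : 0 < S := by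
      obtain ⟨e, he⟩ := Finset.nonempty_iff_ne_empty.mpr hE
      have hcard : 1 < e.card := by rw [hunif e he]; omega
      obtain ⟨a, ha, b, hb, hab⟩ := Finset.one_lt_card.mp hcard
      have h1 : (1:ℝ) ≤ (adjMatrix E a b) ^ 2 := by
        have : 1 ≤ (E.filter fun f => a ∈ f ∧ b ∈ f).card :=
          Finset.card_pos.mpr ⟨e, Finset.mem_filter.mpr ⟨he, ha, hb⟩⟩
        have h2 : (1:ℝ) ≤ adjMatrix E a b := by
          unfold adjMatrix; rw [if_neg hab]; exact_mod_cast this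
        nlinarith
      have h3 : (adjMatrix E a b) ^ 2 ≤ ∑ i, ∑ j, (adjMatrix E i j) ^ 2 := by
        refine le_trans (Finset.single_le_sum (f := fun j => (adjMatrix E a j)^2)
          (fun j _ => sq_nonneg _) (Finset.mem_univ b)) ?_
        exact Finset.single_le_sum (f := fun i => ∑ j, (adjMatrix E i j)^2)
          (fun i _ => Finset.sum_nonneg fun j _ => sq_nonneg _) (Finset.mem_univ a)
      rw [hS, hlam, my_sum_eig_sq]
      linarith
    set t : ℝ := Real.sqrt S with ht
    have htpos : 0 < t := Real.sqrt_pos.mpr hSpos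
    have ht2 : t ^ 2 = S := Real.sq_sqrt hSpos.le
    have habs : ∀ i, |lam i| ≤ t := by
      intro i
      rw [← Real.sqrt_sq_eq_abs, ht]
      exact Real.sqrt_le_sqrt (Finset.single_le_sum
        (fun j _ => sq_nonneg (lam j)) (Finset.mem_univ i))
    -- key pointwise bound
    have hstep : ∀ i, Real.exp (lam i)
        ≤ 1 + lam i + lam i ^ 2 / t ^ 2 * (Real.exp t - 1 - t) := by
      intro i
      have hkey := my_key_ineq t (lam i) (habs i)
      have ht2pos : (0:ℝ) < t ^ 2 := by positivity
      have : Real.exp (lam i) - 1 - lam i ≤ lam i ^ 2 / t ^ 2 * (Real.exp t - 1 - t) := by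
        rw [div_mul_eq_mul_div, le_div_iff₀ ht2pos]
        calc (Real.exp (lam i) - 1 - lam i) * t ^ 2
            = t ^ 2 * (Real.exp (lam i) - 1 - lam i) := mul_comm _ _
          _ ≤ lam i ^ 2 * (Real.exp t - 1 - t) := hkey
      linarith
    have hsum : estradaIndex E ≤ (n : ℝ) + (Real.exp t - 1 - t) := by
      unfold estradaIndex
      calc ∑ i, Real.exp ((adjMatrix_isHermitian E).eigenvalues i)
          ≤ ∑ i, (1 + lam i + lam i ^ 2 / t ^ 2 * (Real.exp t - 1 - t)) :=
            Finset.sum_le_sum fun i _ => hstep i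
        _ = (n : ℝ) + (∑ i, lam i) + (∑ i, lam i ^ 2) / t ^ 2 * (Real.exp t - 1 - t) := by
            rw [Finset.sum_add_distrib, Finset.sum_add_distrib, Finset.sum_div,
              ← Finset.sum_mul]
            simp [Finset.sum_div]
        _ = (n : ℝ) + (Real.exp t - 1 - t) := by
            rw [my_sum_eig_zero, ← hS, ← ht2, div_self (by positivity), one_mul]
            ring
    have htB : t ≤ Real.sqrt B := by rw [ht]; exact Real.sqrt_le_sqrt hSB
    have hlt : estradaIndex E < (n : ℝ) - 1 + Real.exp (Real.sqrt B) := by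
      have h1 : Real.exp t ≤ Real.exp (Real.sqrt B) := Real.exp_le_exp.mpr htB
      calc estradaIndex E ≤ (n : ℝ) + (Real.exp t - 1 - t) := hsum
        _ < (n : ℝ) - 1 + Real.exp t := by linarith
        _ ≤ (n : ℝ) - 1 + Real.exp (Real.sqrt B) := by linarith
    refine ⟨hlt.le, ⟨fun h => absurd h hlt.ne, fun h => absurd h hE⟩⟩
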